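/- arXiv:1901.02477 — 2 statements merged into one kernel-verified Lean document; each statement's English description precedes it below -/
import Mathlib

section
/- The Gaussian mechanism that adds N(0, σ²) noise to a real-valued function f with global sensitivity Δ satisfies (ε, δ)-differential privacy whenever σ ≥ Δ·√(2·ln(1.25/δ))/ε, for any ε ∈ (0, 1) and δ ∈ (0, 1). -/
open MeasureTheory ProbabilityTheory Real
open scoped ENNReal NNReal
set_option maxHeartbeats 1000000

section aux
variable {v : NNReal}


lemma gauss_refl_map (μ : ℝ) (v : NNReal) :
    (gaussianReal μ v).map (fun x => 2*μ - x) = gaussianReal μ v := by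
  calc (gaussianReal μ v).map (fun x => 2*μ - x)
      = ((gaussianReal μ v).map (fun x => (-1)*x)).map (fun y => y + 2*μ) := by
        rw [Measure.map_map (by fun_prop) (by fun_prop)]
        congr 1; ext x; simp; ring
    _ = gaussianReal μ v := by
        rw [gaussianReal_map_const_mul, gaussianReal_map_add_const]
        have h2 : (⟨(-1:ℝ)^2, sq_nonneg _⟩ : NNReal) = 1 := by ext; norm_num
        congr 1
        · ring
        · ext; simp

lemma gauss_refl (μ τ : ℝ) :
    gaussianReal μ v (Set.Iic (μ - τ)) = gaussianReal μ v (Set.Ici (μ + τ)) := by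
  conv_lhs => rw [← gauss_refl_map μ v]
  rw [Measure.map_apply (by fun_prop) measurableSet_Iic]
  congr 1
  ext x
  simp only [Set.mem_preimage, Set.mem_Iic, Set.mem_Ici]
  constructor <;> intro h <;> linarith

lemma gauss_half (hv : v ≠ 0) (μ : ℝ) :
    gaussianReal μ v (Set.Ici μ) = 1/2 := by
  set M := gaussianReal μ v with hM
  have hsing : M {μ} = 0 :=
    (gaussianReal_absolutelyContinuous μ hv) Real.volume_singleton
  have hIoi : M (Set.Ici μ) = M (Set.Ioi μ) := by
    apply le_antisymm
    · calc M (Set.Ici μ) = M ({μ} ∪ Set.Ioi μ) := by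
            rw [Set.singleton_union, Set.Ioi_insert]
      _ ≤ M {μ} + M (Set.Ioi μ) := measure_union_le _ _
      _ = M (Set.Ioi μ) := by rw [hsing, zero_add]
    · exact measure_mono Set.Ioi_subset_Ici_self
  have hcompl : M (Set.Ioi μ) = 1 - M (Set.Iic μ) := by
    rw [← Set.compl_Iic, measure_compl measurableSet_Iic (measure_ne_top _ _), measure_univ]
  have hrefl : M (Set.Iic μ) = M (Set.Ici μ) := by
    have := gauss_refl (v := v) μ 0
    simpa using this
  have h1 : M (Set.Ici μ) = 1 - M (Set.Ici μ) := by
    conv_lhs => rw [hIoi, hcompl, hrefl]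
  have key : M (Set.Ici μ) + M (Set.Ici μ) = 1 := by
    nth_rewrite 1 [h1]
    exact tsub_add_cancel_of_le prob_le_one
  rw [ENNReal.eq_div_iff (by norm_num) (by norm_num), two_mul]
  exact key

variable {v : NNReal}



lemma gauss_tail_pos (hv : v ≠ 0) (μ τ : ℝ) (hτ : 0 ≤ τ) :
    gaussianReal μ v (Set.Ici (μ + τ)) ≤ ENNReal.ofReal (rexp (-τ^2/(2*v)) / 2) := by
  have hv' : (0:ℝ) < v := by positivity
  rw [gaussianReal_apply μ hv]
  calc ∫⁻ x in Set.Ici (μ+τ), gaussianPDF μ v x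
      ≤ ∫⁻ x in Set.Ici (μ+τ), ENNReal.ofReal (rexp (-τ^2/(2*v))) * gaussianPDF (μ+τ) v x := by
        refine setLIntegral_mono ((measurable_gaussianPDF _ _).const_mul _) fun x hx => ?_
        rw [gaussianPDF, gaussianPDF, ← ENNReal.ofReal_mul (exp_nonneg _)]
        refine ENNReal.ofReal_le_ofReal ?_
        have hx' : μ + τ ≤ x := hx
        have h1 : rexp (-(x-μ)^2/(2*(v:ℝ))) ≤
            rexp (-τ^2/(2*(v:ℝ))) * rexp (-(x-(μ+τ))^2/(2*(v:ℝ))) := by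
          rw [← Real.exp_add]
          refine exp_le_exp.mpr ?_
          rw [← add_div, div_le_div_iff_of_pos_right (by positivity : (0:ℝ) < 2*(v:ℝ))]
          nlinarith
        simp only [gaussianPDFReal]
        linarith [mul_le_mul_of_nonneg_left h1
          (inv_nonneg.mpr (Real.sqrt_nonneg (2*π*(v:ℝ))))]
      _ = ENNReal.ofReal (rexp (-τ^2/(2*v))) * ∫⁻ x in Set.Ici (μ+τ), gaussianPDF (μ+τ) v x := by
        rw [lintegral_const_mul _ (measurable_gaussianPDF _ _)]
      _ = ENNReal.ofReal (rexp (-τ^2/(2*v))) * gaussianReal (μ+τ) v (Set.Ici (μ+τ)) := by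
        rw [gaussianReal_apply _ hv]
      _ = ENNReal.ofReal (rexp (-τ^2/(2*v)) / 2) := by
        have hhalf : (1/2 : ℝ≥0∞) = ENNReal.ofReal (1/2) := by
          rw [ENNReal.ofReal_div_of_pos] <;> norm_num
        rw [gauss_half hv, hhalf, ← ENNReal.ofReal_mul (exp_nonneg _)]
        congr 1
        ring

lemma gauss_pdf_le (μ : ℝ) (v : NNReal) (x : ℝ) :
    gaussianPDFReal μ v x ≤ (√(2*π*v))⁻¹ := by
  have h1 : rexp (-(x-μ)^2/(2*(v:ℝ))) ≤ 1 := by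
    rw [Real.exp_le_one_iff]
    exact div_nonpos_of_nonpos_of_nonneg (neg_nonpos.mpr (sq_nonneg _)) (by positivity)
  have h2 : (0:ℝ) ≤ (√(2*π*v))⁻¹ := inv_nonneg.mpr (Real.sqrt_nonneg _)
  calc gaussianPDFReal μ v x = (√(2*π*v))⁻¹ * rexp (-(x-μ)^2/(2*(v:ℝ))) := rfl
    _ ≤ (√(2*π*v))⁻¹ * 1 := mul_le_mul_of_nonneg_left h1 h2
    _ = (√(2*π*v))⁻¹ := mul_one _

lemma gauss_tail_neg (hv : v ≠ 0) (μ τ : ℝ) (hτ : τ ≤ 0) :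
    gaussianReal μ v (Set.Ici (μ + τ)) ≤
      ENNReal.ofReal (1/2 + (-τ) * (√(2*π*v))⁻¹) := by
  have hsub : Set.Ici (μ+τ) ⊆ Set.Ico (μ+τ) μ ∪ Set.Ici μ := by
    intro x hx
    rcases lt_or_ge x μ with h | h
    · exact Or.inl ⟨hx, h⟩
    · exact Or.inr h
  have hico : gaussianReal μ v (Set.Ico (μ+τ) μ) ≤ ENNReal.ofReal ((-τ) * (√(2*π*v))⁻¹) := by
    rw [gaussianReal_apply μ hv]
    calc ∫⁻ x in Set.Ico (μ+τ) μ, gaussianPDF μ v x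
        ≤ ∫⁻ _x in Set.Ico (μ+τ) μ, ENNReal.ofReal ((√(2*π*v))⁻¹) :=
          setLIntegral_mono measurable_const
            (fun x _ => ENNReal.ofReal_le_ofReal (gauss_pdf_le μ v x))
      _ = ENNReal.ofReal ((√(2*π*v))⁻¹) * volume (Set.Ico (μ+τ) μ) := by
          rw [setLIntegral_const]
      _ = ENNReal.ofReal ((-τ) * (√(2*π*v))⁻¹) := by
          rw [Real.volume_Ico, show μ - (μ+τ) = -τ by ring, mul_comm,
            ← ENNReal.ofReal_mul (by linarith : (0:ℝ) ≤ -τ)]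
  calc gaussianReal μ v (Set.Ici (μ+τ))
      ≤ gaussianReal μ v (Set.Ico (μ+τ) μ ∪ Set.Ici μ) := measure_mono hsub
    _ ≤ gaussianReal μ v (Set.Ico (μ+τ) μ) + gaussianReal μ v (Set.Ici μ) :=
        measure_union_le _ _
    _ ≤ ENNReal.ofReal ((-τ) * (√(2*π*v))⁻¹) + ENNReal.ofReal (1/2) := by
        refine add_le_add hico ?_
        rw [gauss_half hv]
        rw [show (1/2 : ℝ≥0∞) = ENNReal.ofReal (1/2) by
          rw [ENNReal.ofReal_div_of_pos] <;> norm_num]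
    _ = ENNReal.ofReal (1/2 + (-τ) * (√(2*π*v))⁻¹) := by
        rw [← ENNReal.ofReal_add (mul_nonneg (by linarith) (inv_nonneg.mpr (Real.sqrt_nonneg _))) (by norm_num), add_comm]

end aux







lemma bad_prob (μ a ε δ Δ : ℝ) (σ : NNReal) (hε : 0 < ε) (hε1 : ε < 1)
    (hδ : 0 < δ) (hδ1 : δ < 1) (hΔ : 0 < Δ) (hA : |a| ≤ Δ)
    (hσ : Δ * Real.sqrt (2 * Real.log (1.25 / δ)) / ε ≤ (σ:ℝ)) :
    gaussianReal μ (σ^2) {x | 2*((σ:ℝ)^2)*ε < 2*a*(x-μ) + a^2} ≤ ENNReal.ofReal δ := by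
  set L := Real.log (1.25 / δ) with hLdef
  set c := Real.sqrt (2 * L) with hcdef
  have hL : 0 < L := Real.log_pos (by rw [lt_div_iff₀ hδ]; linarith)
  have hc : 0 < c := Real.sqrt_pos.mpr (by linarith)
  have hc2 : c^2 = 2*L := Real.sq_sqrt (by linarith)
  have hs : 0 < (σ:ℝ) := lt_of_lt_of_le (by positivity) hσ
  have hσ0 : σ ≠ 0 := by
    intro h0
    rw [h0] at hs
    simp at hs
  have hv : (σ^2 : NNReal) ≠ 0 := pow_ne_zero 2 hσ0
  have hvR : ((σ^2 : NNReal) : ℝ) = (σ:ℝ)^2 := by push_cast; ring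
  set s := (σ:ℝ) with hsdef
  set vR := s^2 with hvRdef
  have hvRpos : 0 < vR := by positivity
  have hkey : Δ * c ≤ ε * s := by
    rw [div_le_iff₀ hε] at hσ
    linarith [hσ]
  -- main case split on a
  rcases eq_or_ne a 0 with ha | ha
  · have hempty : {x : ℝ | 2*((σ:ℝ)^2)*ε < 2*a*(x-μ) + a^2} = ∅ := by
      ext x
      simp only [Set.mem_setOf_eq, Set.mem_empty_iff_false, iff_false, not_lt, ha]
      nlinarith
    rw [hempty]
    simp
  · have hApos : 0 < |a| := abs_pos.mpr ha
    set A := |a| with hAdef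
    set t := (vR*ε - a^2/2)/A with htdef
    -- reduce to tail
    have hred : gaussianReal μ (σ^2) {x | 2*((σ:ℝ)^2)*ε < 2*a*(x-μ) + a^2}
        ≤ gaussianReal μ (σ^2) (Set.Ici (μ + t)) := by
      rcases lt_or_gt_of_ne ha with haneg | hapos
      · have habs : A = -a := abs_of_neg haneg
        have hsub : {x : ℝ | 2*((σ:ℝ)^2)*ε < 2*a*(x-μ) + a^2} ⊆ Set.Iic (μ - t) := by
          intro x hx
          simp only [Set.mem_setOf_eq] at hx
          simp only [Set.mem_Iic]
          have h1 : t ≤ -(x - μ) := by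
            rw [htdef, habs, div_le_iff₀ (by linarith : (0:ℝ) < -a)]
            nlinarith
          linarith
        calc gaussianReal μ (σ^2) {x | 2*((σ:ℝ)^2)*ε < 2*a*(x-μ) + a^2}
            ≤ gaussianReal μ (σ^2) (Set.Iic (μ - t)) := measure_mono hsub
          _ = gaussianReal μ (σ^2) (Set.Ici (μ + t)) := gauss_refl μ t
      · have habs : A = a := abs_of_pos hapos
        have hsub : {x : ℝ | 2*((σ:ℝ)^2)*ε < 2*a*(x-μ) + a^2} ⊆ Set.Ici (μ + t) := by
          intro x hx
          simp only [Set.mem_setOf_eq] at hx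
          simp only [Set.mem_Ici]
          have h1 : t ≤ x - μ := by
            rw [htdef, habs, div_le_iff₀ hapos]
            nlinarith
          linarith
        exact measure_mono hsub
    refine le_trans hred ?_
    have hAΔ : A ≤ Δ := hA
    have hcs : A * c ≤ ε * s := le_trans (by nlinarith) hkey
    have hm : A^2 * (2*L) ≤ vR * ε^2 := by
      calc A^2 * (2*L) = (A*c)^2 := by rw [← hc2]; ring
        _ ≤ (ε*s)^2 := pow_le_pow_left₀ (by positivity) hcs 2
        _ = vR * ε^2 := by rw [hvRdef]; ring
    rcases le_or_gt 0 t with ht | ht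
    · -- positive case: Chernoff with half
      refine le_trans (gauss_tail_pos hv μ t ht) (ENNReal.ofReal_le_ofReal ?_)
      have ht2 : vR * (2*L - ε) ≤ t^2 := by
        rw [htdef, div_pow, le_div_iff₀ (by positivity : (0:ℝ) < A^2)]
        have haA : a^2 = A^2 := (sq_abs a).symm
        rw [haA]
        nlinarith [mul_le_mul_of_nonneg_left hm (le_of_lt hvRpos), sq_nonneg (A^2/2)]
      have hexp : rexp (-t^2/(2*((σ^2:NNReal):ℝ))) ≤ rexp (ε/2) * (δ/1.25) := by
        have h3 : rexp (-t^2/(2*((σ^2:NNReal):ℝ))) ≤ rexp ((ε - 2*L)/2) := by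
          apply exp_le_exp.mpr
          rw [hvR, div_le_div_iff₀ (by positivity) (by norm_num)]
          nlinarith [ht2]
        have h4 : rexp ((ε - 2*L)/2) = rexp (ε/2) * rexp (-L) := by
          rw [← Real.exp_add]; congr 1; ring
        have h5 : rexp (-L) = δ/1.25 := by
          rw [hLdef, Real.exp_neg, Real.exp_log (by positivity), inv_div]
        rw [h4, h5] at h3
        exact h3
      have hexphalf : rexp (ε/2) ≤ 5/3 := by
        have hsq : rexp (1/2) * rexp (1/2) = rexp 1 := by
          rw [← Real.exp_add]; norm_num
        have h6 : rexp (ε/2) ≤ rexp (1/2) := exp_le_exp.mpr (by linarith)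
        nlinarith [hsq, Real.exp_one_lt_d9, Real.exp_pos (1/2), h6]
      calc rexp (-t^2/(2*((σ^2:NNReal):ℝ))) / 2 ≤ (rexp (ε/2) * (δ/1.25)) / 2 := by linarith
        _ ≤ ((5/3) * (δ/1.25)) / 2 := by
            have : 0 ≤ δ/1.25 := by positivity
            nlinarith
        _ ≤ δ := by
            have h125 : δ/1.25 = (4/5)*δ := by norm_num; ring
            rw [h125]
            linarith
    · -- negative case
      refine le_trans (gauss_tail_neg hv μ t (le_of_lt ht)) (ENNReal.ofReal_le_ofReal ?_)
      -- derive δ > 15/16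
      have hnum : vR * ε < A^2/2 := by
        by_contra hcon
        push_neg at hcon
        have h0t : 0 ≤ t := by
          rw [htdef]
          apply div_nonneg _ hApos.le
          have haA := sq_abs a
          linarith
        linarith
      have hc2e : 2*c^2 < ε := by
        nlinarith [hm, hnum, hc, hvRpos, hε]
      have hLe : L < 1/4 := by linarith [hc2]
      have hδlow : 15/16 < δ := by
        have h7 : 1.25/δ = rexp L := (Real.exp_log (by positivity)).symm
        have h8 : rexp L < rexp (1/4) := exp_lt_exp.mpr hLe
        have h9 : rexp (1/4) ≤ 4/3 := by
          have h10 : (-1/4 : ℝ) + 1 ≤ rexp (-1/4) := Real.add_one_le_exp _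
          have h11 : rexp (1/4) * rexp (-1/4) = 1 := by
            rw [← Real.exp_add]; norm_num
          nlinarith [Real.exp_pos (-1/4)]
        have : 1.25/δ < 4/3 := by rw [h7]; linarith
        rw [div_lt_iff₀ hδ] at this
        linarith
      -- bound -t
      have hmt : -t ≤ Δ/2 := by
        rw [htdef, ← neg_div, neg_sub, div_le_iff₀ hApos]
        nlinarith [sq_abs a, mul_pos hvRpos hε, mul_le_mul_of_nonneg_right hAΔ hApos.le]
      have hsqrt2pi : (5/2:ℝ) ≤ √(2*π) := by
        rw [show (5/2:ℝ) = √((5/2)^2) from (Real.sqrt_sq (by norm_num)).symm]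
        apply Real.sqrt_le_sqrt
        nlinarith [Real.pi_gt_d6]
      have hsplit : √(2*π*((σ^2:NNReal):ℝ)) = √(2*π) * s := by
        rw [hvR, show 2*π*s^2 = (2*π) * s^2 from by ring, Real.sqrt_mul (by positivity),
          Real.sqrt_sq (le_of_lt hs)]
      have hclow : (3/5:ℝ) ≤ c := by
        have hL5 : (1/5:ℝ) ≤ L := by
          have h12 : Real.log ((1.25/δ)⁻¹) ≤ (1.25/δ)⁻¹ - 1 :=
            Real.log_le_sub_one_of_pos (by positivity)
          rw [Real.log_inv] at h12
          have h13 : (1.25/δ)⁻¹ = δ/1.25 := inv_div _ _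
          rw [h13] at h12
          have : δ/1.25 ≤ 4/5 := by rw [div_le_iff₀ (by norm_num : (0:ℝ) < 1.25)]; linarith
          linarith
        rw [hcdef]
        rw [show (3/5:ℝ) = √((3/5)^2) from (Real.sqrt_sq (by norm_num)).symm]
        apply Real.sqrt_le_sqrt
        nlinarith
      -- (-t) * inv ≤ 1/3
      have hbig : (5/2) * (Δ*c/ε) ≤ √(2*π) * s := by
        have h14 : Δ*c/ε ≤ s := by rw [div_le_iff₀ hε]; linarith
        have h15 : 0 ≤ Δ*c/ε := by positivity
        nlinarith [hsqrt2pi, hs]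
      have hinvle : (√(2*π*((σ^2:NNReal):ℝ)))⁻¹ ≤ ((5/2) * (Δ*c/ε))⁻¹ := by
        rw [hsplit]
        apply inv_anti₀ (by positivity) hbig
      have hfinal : (-t) * (√(2*π*((σ^2:NNReal):ℝ)))⁻¹ ≤ 1/3 := by
        have h16 : (-t) * (√(2*π*((σ^2:NNReal):ℝ)))⁻¹ ≤ (Δ/2) * ((5/2) * (Δ*c/ε))⁻¹ := by
          apply mul_le_mul hmt hinvle (by positivity) (by linarith)
        have h17 : (Δ/2) * ((5/2) * (Δ*c/ε))⁻¹ = ε/(5*c) := by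
          field_simp
        rw [h17] at h16
        have h18 : ε/(5*c) ≤ 1/3 := by
          rw [div_le_iff₀ (by positivity)]
          nlinarith
        linarith
      linarith



/-- The Gaussian mechanism `d ↦ f d + N(0, σ²)` for a query `f` of global
sensitivity Δ is (ε, δ)-differentially private whenever
σ ≥ Δ·√(2·ln(1.25/δ))/ε, for ε, δ ∈ (0, 1). -/
theorem gaussian_mechanism_dp
    {D : Type*} (adj : D → D → Prop)
    (f : D → ℝ) (Δ : ℝ) (hΔ : 0 < Δ)
    (hsens : ∀ d d', adj d d' → |f d - f d'| ≤ Δ)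
    (ε δ : ℝ) (hε : ε ∈ Set.Ioo (0:ℝ) 1) (hδ : δ ∈ Set.Ioo (0:ℝ) 1)
    (σ : NNReal) (hσ : Δ * Real.sqrt (2 * Real.log (1.25 / δ)) / ε ≤ (σ : ℝ))
    (M : D → Measure ℝ)
    (hM : ∀ d, M d = gaussianReal (f d) (σ ^ 2)) :
    ∀ d d', adj d d' → ∀ S : Set ℝ, MeasurableSet S →
      M d S ≤ ENNReal.ofReal (Real.exp ε) * M d' S + ENNReal.ofReal δ := by
  obtain ⟨hε0, hε1⟩ := hε
  obtain ⟨hδ0, hδ1⟩ := hδ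
  intro d d' hadj S hS
  rw [hM d, hM d']
  set μ := f d with hμ
  set μ' := f d' with hμ'
  set a := μ - μ' with hadef
  have hA : |a| ≤ Δ := hsens d d' hadj
  -- positivity of σ
  have hL : 0 < Real.log (1.25 / δ) := Real.log_pos (by rw [lt_div_iff₀ hδ0]; linarith)
  have hs : 0 < (σ:ℝ) := lt_of_lt_of_le (by positivity) hσ
  have hσ0 : σ ≠ 0 := by
    intro h0; rw [h0] at hs; simp at hs
  have hv : (σ^2 : NNReal) ≠ 0 := pow_ne_zero 2 hσ0
  have hvR : ((σ^2 : NNReal) : ℝ) = (σ:ℝ)^2 := by push_cast; ring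
  have hvpos : (0:ℝ) < ((σ^2 : NNReal) : ℝ) := by rw [hvR]; positivity
  set G := {x : ℝ | gaussianPDFReal μ (σ^2) x ≤ rexp ε * gaussianPDFReal μ' (σ^2) x} with hGdef
  have hG : MeasurableSet G :=
    measurableSet_le (measurable_gaussianPDFReal _ _)
      ((measurable_gaussianPDFReal _ _).const_mul _)
  have hGc : Gᶜ = {x | 2*((σ:ℝ)^2)*ε < 2*a*(x-μ) + a^2} := by
    ext x
    simp only [hGdef, Set.mem_compl_iff, Set.mem_setOf_eq, not_le]
    rw [gaussianPDFReal, gaussianPDFReal]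
    rw [show rexp ε * ((√(2*π*((σ^2:NNReal):ℝ)))⁻¹ * rexp (-(x-μ')^2/(2*((σ^2:NNReal):ℝ)))) =
        (√(2*π*((σ^2:NNReal):ℝ)))⁻¹ * rexp (ε + -(x-μ')^2/(2*((σ^2:NNReal):ℝ))) from by
      rw [Real.exp_add]; ring]
    have hinv : (0:ℝ) < (√(2*π*((σ^2:NNReal):ℝ)))⁻¹ := by positivity
    rw [mul_lt_mul_iff_right₀ hinv, Real.exp_lt_exp]
    have h2v : (0:ℝ) < 2*((σ^2:NNReal):ℝ) := by linarith
    rw [show ε + -(x-μ')^2/(2*((σ^2:NNReal):ℝ)) =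
        (2*((σ^2:NNReal):ℝ)*ε - (x-μ')^2)/(2*((σ^2:NNReal):ℝ)) from by field_simp; ring,
      show -(x-μ)^2/(2*((σ^2:NNReal):ℝ)) =
        (0 - (x-μ)^2)/(2*((σ^2:NNReal):ℝ)) from by ring_nf,
      div_lt_div_iff_of_pos_right h2v, hvR]
    constructor
    · intro h
      have hμ'a : μ' = μ - a := by rw [hadef]; ring
      rw [hμ'a] at h
      nlinarith [h]
    · intro h
      have hμ'a : μ' = μ - a := by rw [hadef]; ring
      rw [hμ'a]
      nlinarith [h]
  have hsplit : gaussianReal μ (σ^2) S =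
      gaussianReal μ (σ^2) (S ∩ G) + gaussianReal μ (σ^2) (S \ G) :=
    (measure_inter_add_diff S hG).symm
  have hgood : gaussianReal μ (σ^2) (S ∩ G) ≤
      ENNReal.ofReal (rexp ε) * gaussianReal μ' (σ^2) S := by
    calc gaussianReal μ (σ^2) (S ∩ G)
        = ∫⁻ x in S ∩ G, gaussianPDF μ (σ^2) x := gaussianReal_apply μ hv _
      _ ≤ ∫⁻ x in S ∩ G, ENNReal.ofReal (rexp ε) * gaussianPDF μ' (σ^2) x := by
          refine setLIntegral_mono ((measurable_gaussianPDF _ _).const_mul _) fun x hx => ?_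
          rw [gaussianPDF, gaussianPDF, ← ENNReal.ofReal_mul (exp_nonneg _)]
          exact ENNReal.ofReal_le_ofReal hx.2
      _ = ENNReal.ofReal (rexp ε) * ∫⁻ x in S ∩ G, gaussianPDF μ' (σ^2) x := by
          rw [lintegral_const_mul _ (measurable_gaussianPDF _ _)]
      _ = ENNReal.ofReal (rexp ε) * gaussianReal μ' (σ^2) (S ∩ G) := by
          rw [gaussianReal_apply μ' hv]
      _ ≤ ENNReal.ofReal (rexp ε) * gaussianReal μ' (σ^2) S :=
          mul_le_mul_right (measure_mono Set.inter_subset_left) _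
  have hbad : gaussianReal μ (σ^2) (S \ G) ≤ ENNReal.ofReal δ := by
    calc gaussianReal μ (σ^2) (S \ G)
        ≤ gaussianReal μ (σ^2) Gᶜ := measure_mono fun x hx => hx.2
      _ ≤ ENNReal.ofReal δ := by
          rw [hGc]
          exact bad_prob μ a ε δ Δ σ hε0 hε1 hδ0 hδ1 hΔ hA hσ
  rw [hsplit]
  exact add_le_add hgood hbad
end

section
/- If a single iteration of a mechanism applied to a uniformly sampled lot of size L from a dataset of size N is (ε, δ)-differentially private with respect to the lot, and each record is included in the lot independently with probability q = L/N, then the iteration is (log(1 + q(e^ε − 1)), qδ)-differentially private with respect to the full dataset; in particular, for ε ≤ 1 it is (2qε, qδ)-differentially private. -/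
open MeasureTheory ENNReal

private lemma sum_powerset_insert_aux {X : Type*} [DecidableEq X] {β : Type*} [AddCommMonoid β]
    {x : X} {D : Finset X} (hx : x ∉ D) (f : Finset X → β) :
    ∑ A ∈ (insert x D).powerset, f A =
      ∑ A ∈ D.powerset, f A + ∑ A ∈ D.powerset, f (insert x A) := by
  rw [Finset.powerset_insert, Finset.sum_union, Finset.sum_image]
  · intro A hA B hB hAB
    have hxA : x ∉ A := fun h => hx (Finset.mem_powerset.mp hA h)
    have hxB : x ∉ B := fun h => hx (Finset.mem_powerset.mp hB h)
    have : (insert x A).erase x = (insert x B).erase x := by rw [hAB]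
    rwa [Finset.erase_insert hxA, Finset.erase_insert hxB] at this
  · rw [Finset.disjoint_left]
    intro A hA hA'
    obtain ⟨B, _, rfl⟩ := Finset.mem_image.mp hA'
    exact hx (Finset.mem_powerset.mp hA (Finset.mem_insert_self x B))

private lemma sum_weights_eq_one {X : Type*} [DecidableEq X] (q : ℝ) (D : Finset X) :
    ∑ A ∈ D.powerset, q ^ A.card * (1 - q) ^ (D.card - A.card) = 1 := by
  induction D using Finset.induction_on with
  | empty => simp
  | insert _ _ hx ih =>
    rename_i y D
    rw [sum_powerset_insert_aux hx]
    have h1 : ∑ A ∈ D.powerset, q ^ A.card * (1 - q) ^ ((insert y D).card - A.card)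
        = (1 - q) * ∑ A ∈ D.powerset, q ^ A.card * (1 - q) ^ (D.card - A.card) := by
      rw [Finset.mul_sum]
      refine Finset.sum_congr rfl fun A hA => ?_
      have hc : A.card ≤ D.card := Finset.card_le_card (Finset.mem_powerset.mp hA)
      rw [Finset.card_insert_of_notMem hx, Nat.succ_sub hc, pow_succ]
      ring
    have h2 : ∑ A ∈ D.powerset, q ^ (insert y A).card * (1 - q) ^ ((insert y D).card - (insert y A).card)
        = q * ∑ A ∈ D.powerset, q ^ A.card * (1 - q) ^ (D.card - A.card) := by
      rw [Finset.mul_sum]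
      refine Finset.sum_congr rfl fun A hA => ?_
      have hyA : y ∉ A := fun h => hx (Finset.mem_powerset.mp hA h)
      rw [Finset.card_insert_of_notMem hx, Finset.card_insert_of_notMem hyA,
        Nat.succ_sub_succ, pow_succ]
      ring
    rw [h1, h2, ih]
    ring

/-- Privacy amplification by subsampling: if a mechanism `M` is (ε, δ)-DP with
respect to its input lot, and the subsampled mechanism `Msub` first includes
each record of the dataset independently with probability `q = L/N` and then
applies `M` to the sampled lot, then `Msub` is
(log(1 + q(e^ε − 1)), qδ)-DP with respect to the full dataset; in particular,
for ε ≤ 1 it is (2qε, qδ)-DP. -/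
theorem privacy_amplification_by_subsampling
    {X : Type*} {Ω : Type*} [MeasurableSpace Ω] [DecidableEq X]
    (M : Finset X → Measure Ω) [∀ A, IsProbabilityMeasure (M A)]
    (ε δ q : ℝ) (hε : 0 < ε) (hδ : 0 ≤ δ)
    (L N : ℕ) (hN : 0 < N) (hL : L ≤ N) (hq : q = (L : ℝ) / N)
    (hq0 : 0 < q) (hq1 : q < 1)
    -- M is (ε, δ)-DP with respect to add/remove-one adjacency of the lot
    (hM : ∀ (A : Finset X) (x : X), x ∉ A → ∀ S : Set Ω, MeasurableSet S →
      M (insert x A) S ≤ ENNReal.ofReal (Real.exp ε) * M A S + ENNReal.ofReal δ ∧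
      M A S ≤ ENNReal.ofReal (Real.exp ε) * M (insert x A) S + ENNReal.ofReal δ)
    -- the subsampled mechanism: sample each record independently with prob. q,
    -- then run M on the sample
    (Msub : Finset X → Measure Ω)
    (hMsub : ∀ D : Finset X, Msub D =
      ∑ S ∈ D.powerset,
        (ENNReal.ofReal (q ^ S.card * (1 - q) ^ (D.card - S.card))) • M S) :
    ∀ (D : Finset X) (x : X), x ∉ D → ∀ S : Set Ω, MeasurableSet S →
      (Msub (insert x D) S ≤
          ENNReal.ofReal (Real.exp (Real.log (1 + q * (Real.exp ε - 1)))) * Msub D S +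
            ENNReal.ofReal (q * δ) ∧
        Msub D S ≤
          ENNReal.ofReal (Real.exp (Real.log (1 + q * (Real.exp ε - 1)))) * Msub (insert x D) S +
            ENNReal.ofReal (q * δ)) ∧
      (ε ≤ 1 →
        Msub (insert x D) S ≤
            ENNReal.ofReal (Real.exp (2 * q * ε)) * Msub D S + ENNReal.ofReal (q * δ) ∧
          Msub D S ≤
            ENNReal.ofReal (Real.exp (2 * q * ε)) * Msub (insert x D) S + ENNReal.ofReal (q * δ)) := by
  intro D x hx T hT
  set a : ℝ := Real.exp ε with ha_def
  have ha1 : 1 ≤ a := by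
    have := Real.add_one_le_exp ε; linarith
  set c : ℝ := 1 + q * (a - 1) with hc_def
  have hc1 : 1 ≤ c := by nlinarith
  have hcpos : 0 < c := by linarith
  have hca : c ≤ a := by nlinarith
  have h1q : 0 ≤ 1 - q := by linarith
  have hp : ∀ A : Finset X, 0 ≤ q ^ A.card * (1 - q) ^ (D.card - A.card) := by
    intro A; positivity
  -- notation
  set V : ℝ≥0∞ := ∑ A ∈ D.powerset,
    ENNReal.ofReal (q ^ A.card * (1 - q) ^ (D.card - A.card)) * M A T with hV_def
  set W : ℝ≥0∞ := ∑ A ∈ D.powerset,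
    ENNReal.ofReal (q ^ A.card * (1 - q) ^ (D.card - A.card)) * M (insert x A) T with hW_def
  have hPsum : (∑ A ∈ D.powerset,
      ENNReal.ofReal (q ^ A.card * (1 - q) ^ (D.card - A.card))) = 1 := by
    rw [← ENNReal.ofReal_sum_of_nonneg (fun A _ => hp A), sum_weights_eq_one, ENNReal.ofReal_one]
  have hV : Msub D T = V := by
    rw [hMsub, Measure.finset_sum_apply]
    simp [Measure.smul_apply, smul_eq_mul, hV_def]
  have hsplit : Msub (insert x D) T
      = ENNReal.ofReal (1 - q) * V + ENNReal.ofReal q * W := by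
    rw [hMsub, Measure.finset_sum_apply]
    simp only [Measure.smul_apply, smul_eq_mul]
    rw [sum_powerset_insert_aux hx]
    congr 1
    · rw [hV_def, Finset.mul_sum]
      refine Finset.sum_congr rfl fun A hA => ?_
      have hc' : A.card ≤ D.card := Finset.card_le_card (Finset.mem_powerset.mp hA)
      rw [Finset.card_insert_of_notMem hx, Nat.succ_sub hc', pow_succ,
        show q ^ A.card * ((1 - q) ^ (D.card - A.card) * (1 - q))
          = (1 - q) * (q ^ A.card * (1 - q) ^ (D.card - A.card)) by ring,
        ENNReal.ofReal_mul h1q, mul_assoc]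
    · rw [hW_def, Finset.mul_sum]
      refine Finset.sum_congr rfl fun A hA => ?_
      have hxA : x ∉ A := fun h => hx (Finset.mem_powerset.mp hA h)
      rw [Finset.card_insert_of_notMem hx, Finset.card_insert_of_notMem hxA,
        Nat.succ_sub_succ, pow_succ,
        show q ^ A.card * q * (1 - q) ^ (D.card - A.card)
          = q * (q ^ A.card * (1 - q) ^ (D.card - A.card)) by ring,
        ENNReal.ofReal_mul hq0.le, mul_assoc]
  have hW : W ≤ ENNReal.ofReal a * V + ENNReal.ofReal δ := by
    calc W ≤ ∑ A ∈ D.powerset,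
        (ENNReal.ofReal a * (ENNReal.ofReal (q ^ A.card * (1 - q) ^ (D.card - A.card)) * M A T)
          + ENNReal.ofReal (q ^ A.card * (1 - q) ^ (D.card - A.card)) * ENNReal.ofReal δ) := by
          refine Finset.sum_le_sum fun A hA => ?_
          have hxA : x ∉ A := fun h => hx (Finset.mem_powerset.mp hA h)
          calc ENNReal.ofReal (q ^ A.card * (1 - q) ^ (D.card - A.card)) * M (insert x A) T
              ≤ ENNReal.ofReal (q ^ A.card * (1 - q) ^ (D.card - A.card)) *
                (ENNReal.ofReal a * M A T + ENNReal.ofReal δ) :=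
                mul_le_mul_right ((hM A x hxA T hT).1) _
            _ = _ := by ring
      _ = ENNReal.ofReal a * V + ENNReal.ofReal δ := by
          rw [Finset.sum_add_distrib, ← Finset.mul_sum, ← Finset.sum_mul, hPsum, one_mul, hV_def]
  have hVW : V ≤ ENNReal.ofReal a * W + ENNReal.ofReal δ := by
    calc V ≤ ∑ A ∈ D.powerset,
        (ENNReal.ofReal a * (ENNReal.ofReal (q ^ A.card * (1 - q) ^ (D.card - A.card)) * M (insert x A) T)
          + ENNReal.ofReal (q ^ A.card * (1 - q) ^ (D.card - A.card)) * ENNReal.ofReal δ) := by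
          refine Finset.sum_le_sum fun A hA => ?_
          have hxA : x ∉ A := fun h => hx (Finset.mem_powerset.mp hA h)
          calc ENNReal.ofReal (q ^ A.card * (1 - q) ^ (D.card - A.card)) * M A T
              ≤ ENNReal.ofReal (q ^ A.card * (1 - q) ^ (D.card - A.card)) *
                (ENNReal.ofReal a * M (insert x A) T + ENNReal.ofReal δ) :=
                mul_le_mul_right ((hM A x hxA T hT).2) _
            _ = _ := by ring
      _ = ENNReal.ofReal a * W + ENNReal.ofReal δ := by
          rw [Finset.sum_add_distrib, ← Finset.mul_sum, ← Finset.sum_mul, hPsum, one_mul, hW_def]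
  -- main inequality 1
  have key1 : Msub (insert x D) T ≤ ENNReal.ofReal c * Msub D T + ENNReal.ofReal (q * δ) := by
    rw [hsplit, hV]
    calc ENNReal.ofReal (1 - q) * V + ENNReal.ofReal q * W
        ≤ ENNReal.ofReal (1 - q) * V
          + ENNReal.ofReal q * (ENNReal.ofReal a * V + ENNReal.ofReal δ) :=
          add_le_add_right (mul_le_mul_right hW _) _
      _ = (ENNReal.ofReal (1 - q) + ENNReal.ofReal q * ENNReal.ofReal a) * V
          + ENNReal.ofReal q * ENNReal.ofReal δ := by ring
      _ = ENNReal.ofReal c * V + ENNReal.ofReal (q * δ) := by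
          rw [← ENNReal.ofReal_mul hq0.le, ← ENNReal.ofReal_add h1q (by positivity),
            ← ENNReal.ofReal_mul hq0.le]
          rw [hc_def]
          congr 2
          ring
  -- main inequality 2
  have key2 : Msub D T ≤ ENNReal.ofReal c * Msub (insert x D) T + ENNReal.ofReal (q * δ) := by
    rw [hsplit, hV]
    have hane : ENNReal.ofReal a ≠ 0 := by
      simp [ENNReal.ofReal_eq_zero]; linarith
    rw [← ENNReal.mul_le_mul_iff_right hane ENNReal.ofReal_ne_top]
    have hreal : a ≤ a * c * (1 - q) + c * q := by nlinarith [sq_nonneg (a - 1)]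
    calc ENNReal.ofReal a * V
        ≤ ENNReal.ofReal (a * c * (1 - q) + c * q) * V :=
          mul_le_mul_left (ENNReal.ofReal_le_ofReal hreal) V
      _ = ENNReal.ofReal a * (ENNReal.ofReal c * (ENNReal.ofReal (1 - q) * V))
          + ENNReal.ofReal c * (ENNReal.ofReal q * V) := by
          rw [ENNReal.ofReal_add (by positivity) (by positivity), add_mul,
            ENNReal.ofReal_mul (by positivity), ENNReal.ofReal_mul (by positivity),
            ENNReal.ofReal_mul hcpos.le]
          ring
      _ ≤ ENNReal.ofReal a * (ENNReal.ofReal c * (ENNReal.ofReal (1 - q) * V))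
          + ENNReal.ofReal c * (ENNReal.ofReal q * (ENNReal.ofReal a * W + ENNReal.ofReal δ)) := by
          gcongr
      _ = ENNReal.ofReal a * (ENNReal.ofReal c * (ENNReal.ofReal (1 - q) * V)
            + ENNReal.ofReal c * (ENNReal.ofReal q * W))
          + ENNReal.ofReal c * ENNReal.ofReal q * ENNReal.ofReal δ := by ring
      _ ≤ ENNReal.ofReal a * (ENNReal.ofReal c * (ENNReal.ofReal (1 - q) * V)
            + ENNReal.ofReal c * (ENNReal.ofReal q * W))
          + ENNReal.ofReal a * ENNReal.ofReal q * ENNReal.ofReal δ := by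
          exact add_le_add_right (mul_le_mul_left (mul_le_mul_left (ENNReal.ofReal_le_ofReal hca) _) _) _
      _ = ENNReal.ofReal a * (ENNReal.ofReal c
            * (ENNReal.ofReal (1 - q) * V + ENNReal.ofReal q * W) + ENNReal.ofReal (q * δ)) := by
          rw [ENNReal.ofReal_mul hq0.le]
          ring
  have hexp : Real.exp (Real.log (1 + q * (Real.exp ε - 1))) = c := Real.exp_log hcpos
  constructor
  · rw [hexp]
    exact ⟨key1, key2⟩
  · intro hε1
    have haux : a ≤ 1 + 2 * ε := by
      have hconv := convexOn_exp.2 (Set.mem_univ (0 : ℝ)) (Set.mem_univ (1 : ℝ))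
        (by linarith : (0:ℝ) ≤ 1 - ε) hε.le (by ring)
      simp only [smul_eq_mul, mul_zero, mul_one, zero_add, Real.exp_zero] at hconv
      have he3 : Real.exp 1 < 3 := lt_trans Real.exp_one_lt_d9 (by norm_num)
      nlinarith
    have hc2 : c ≤ Real.exp (2 * q * ε) := by
      have h2 : c ≤ 1 + 2 * q * ε := by nlinarith
      have := Real.add_one_le_exp (2 * q * ε)
      linarith
    have hmono : ENNReal.ofReal c ≤ ENNReal.ofReal (Real.exp (2 * q * ε)) :=
      ENNReal.ofReal_le_ofReal hc2
    constructor
    · exact key1.trans (by gcongr)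
    · exact key2.trans (by gcongr)
end
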